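/- arXiv:2309.07735 — 5 statements merged into one kernel-verified Lean document; each statement's English description precedes it below -/
import Mathlib

section
/- Let m > 0 and fix β ∈ ℝ. For real α with α < −β₋²/(8πm), define g(α) := 8πm·(−log(√(β² − 8πmα) − β) + β/(√(β² − 8πmα) − β)). Then at every such α, g is differentiable with derivative g'(α) = 2C², where C = 4πm/(√(β² − 8πmα) − β). -/
open Real

/-- Proposition 2.3, case `χ(Σ) < 0` (with `m = |χ(Σ)|`): the partial derivative
in `α` of `F(α, β) = 8πm(−log(√(β² − 8πmα) − β) + β/(√(β² − 8πmα) − β))` equals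
`2C²`, where `C = 4πm/(√(β² − 8πmα) − β)`. -/
theorem stmt_11 (m β : ℝ) (hm : 0 < m) (α : ℝ)
    (hα : α < -(max (-β) 0) ^ 2 / (8 * π * m)) :
    HasDerivAt
      (fun a : ℝ =>
        8 * π * m *
          (-Real.log (Real.sqrt (β ^ 2 - 8 * π * m * a) - β) +
            β / (Real.sqrt (β ^ 2 - 8 * π * m * a) - β)))
      (2 * (4 * π * m / (Real.sqrt (β ^ 2 - 8 * π * m * α) - β)) ^ 2) α := by
  have hπ := Real.pi_pos
  have h8 : (0:ℝ) < 8 * π * m := by positivity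
  have hM : 8 * π * m * α < -(max (-β) 0) ^ 2 := by
    have h := (lt_div_iff₀ h8).mp hα
    linarith [h]
  have hx : (0:ℝ) < β ^ 2 - 8 * π * m * α := by
    nlinarith [sq_nonneg (max (-β) 0), sq_nonneg β]
  set x := β ^ 2 - 8 * π * m * α with hxdef
  have hβx : β ^ 2 < x := by
    have := sq_nonneg (max (-β) 0)
    simp only [hxdef]
    nlinarith
  have hsβ : β < Real.sqrt x := by
    rcases le_or_gt β 0 with h | h
    · exact lt_of_le_of_lt h (Real.sqrt_pos.mpr hx)
    · exact (Real.lt_sqrt h.le).mpr hβx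
  have hu : 0 < Real.sqrt x - β := sub_pos.mpr hsβ
  have hune : Real.sqrt x - β ≠ 0 := ne_of_gt hu
  have hs0 : 0 < Real.sqrt x := Real.sqrt_pos.mpr hx
  have hsne : Real.sqrt x ≠ 0 := ne_of_gt hs0
  have hxne : x ≠ 0 := ne_of_gt hx
  have h1 : HasDerivAt (fun a : ℝ => β ^ 2 - 8 * π * m * a) (-(8 * π * m)) α := by
    simpa using ((hasDerivAt_id α).const_mul (8 * π * m)).const_sub (β ^ 2)
  have h2 : HasDerivAt (fun a : ℝ => Real.sqrt (β ^ 2 - 8 * π * m * a))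
      (1 / (2 * Real.sqrt x) * -(8 * π * m)) α :=
    (Real.hasDerivAt_sqrt hxne).comp α h1
  have h3 : HasDerivAt (fun a : ℝ => Real.sqrt (β ^ 2 - 8 * π * m * a) - β)
      (1 / (2 * Real.sqrt x) * -(8 * π * m)) α := h2.sub_const β
  have hlog : HasDerivAt (fun a : ℝ => Real.log (Real.sqrt (β ^ 2 - 8 * π * m * a) - β))
      ((Real.sqrt x - β)⁻¹ * (1 / (2 * Real.sqrt x) * -(8 * π * m))) α :=
    by have := (Real.hasDerivAt_log hune).comp α h3; exact this
  have hinv : HasDerivAt (fun a : ℝ => (Real.sqrt (β ^ 2 - 8 * π * m * a) - β)⁻¹)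
      (-(1 / (2 * Real.sqrt x) * -(8 * π * m)) / (Real.sqrt x - β) ^ 2) α :=
    h3.inv hune
  have hfull := ((hlog.neg).add (hinv.const_mul β)).const_mul (8 * π * m)
  have heq : (fun a : ℝ =>
        8 * π * m *
          (-Real.log (Real.sqrt (β ^ 2 - 8 * π * m * a) - β) +
            β / (Real.sqrt (β ^ 2 - 8 * π * m * a) - β))) =
      (fun a : ℝ =>
        8 * π * m *
          (-Real.log (Real.sqrt (β ^ 2 - 8 * π * m * a) - β) +
            β * (Real.sqrt (β ^ 2 - 8 * π * m * a) - β)⁻¹)) := by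
    funext a
    rw [div_eq_mul_inv]
  rw [heq]
  refine hfull.congr_deriv ?_
  field_simp
  ring
end

section
/- Let m > 0 and fix α ∈ ℝ. For real β with α < −β₋²/(8πm), define g(β) := 8πm·(−log(√(β² − 8πmα) − β) + β/(√(β² − 8πmα) − β)). Then at every such β, g is differentiable with derivative g'(β) = 4C, where C = 4πm/(√(β² − 8πmα) − β). -/
open Real

/-- Proposition 2.3, case `χ(Σ) < 0` (with `m = |χ(Σ)|`): the partial derivative
in `β` of `F(α, β) = 8πm(−log(√(β² − 8πmα) − β) + β/(√(β² − 8πmα) − β))` equals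
`4C`, where `C = 4πm/(√(β² − 8πmα) − β)`. -/
theorem stmt_12 (m α : ℝ) (hm : 0 < m) (β : ℝ)
    (hα : α < -(max (-β) 0) ^ 2 / (8 * π * m)) :
    HasDerivAt
      (fun b : ℝ =>
        8 * π * m *
          (-Real.log (Real.sqrt (b ^ 2 - 8 * π * m * α) - b) +
            b / (Real.sqrt (b ^ 2 - 8 * π * m * α) - b)))
      (4 * (4 * π * m / (Real.sqrt (β ^ 2 - 8 * π * m * α) - β))) β := by
  have hπ : (0:ℝ) < π := Real.pi_pos
  have h8 : (0:ℝ) < 8 * π * m := by positivity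
  have h1 : 8 * π * m * α < -(max (-β) 0) ^ 2 := by
    have := (lt_div_iff₀ h8).mp hα
    nlinarith
  have hM : (0:ℝ) ≤ max (-β) 0 := le_max_right _ _
  have hβ2 : β ^ 2 < β ^ 2 - 8 * π * m * α := by nlinarith
  have hD : 0 < β ^ 2 - 8 * π * m * α := by nlinarith [sq_nonneg β]
  set s := Real.sqrt (β ^ 2 - 8 * π * m * α) with hs_def
  have hs_pos : 0 < s := Real.sqrt_pos.mpr hD
  have hs_sq : s ^ 2 = β ^ 2 - 8 * π * m * α := Real.sq_sqrt hD.le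
  have hβs : β < s := by
    have h2 : |β| < s := by
      have := Real.sqrt_lt_sqrt (sq_nonneg β) hβ2
      rwa [Real.sqrt_sq_eq_abs] at this
    exact lt_of_le_of_lt (le_abs_self β) h2
  have hne : s - β ≠ 0 := by linarith [hβs]
  have hinner : HasDerivAt (fun b : ℝ => b ^ 2 - 8 * π * m * α) (2 * β) β := by
    simpa using (hasDerivAt_pow 2 β).sub_const (8 * π * m * α)
  have hsqrt : HasDerivAt (fun b : ℝ => Real.sqrt (b ^ 2 - 8 * π * m * α))
      (2 * β / (2 * s)) β := hinner.sqrt hD.ne'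
  have hh : HasDerivAt (fun b : ℝ => Real.sqrt (b ^ 2 - 8 * π * m * α) - b)
      (2 * β / (2 * s) - 1) β := hsqrt.sub (hasDerivAt_id β)
  have hlog : HasDerivAt (fun b : ℝ => Real.log (Real.sqrt (b ^ 2 - 8 * π * m * α) - b))
      ((2 * β / (2 * s) - 1) / (s - β)) β := hh.log hne
  have hdiv : HasDerivAt (fun b : ℝ => b / (Real.sqrt (b ^ 2 - 8 * π * m * α) - b))
      ((1 * (s - β) - β * (2 * β / (2 * s) - 1)) / (s - β) ^ 2) β :=
    (hasDerivAt_id β).div hh hne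
  have hg := (hlog.neg.add hdiv).const_mul (8 * π * m)
  refine hg.congr_deriv ?_
  have hs_ne : s ≠ 0 := hs_pos.ne'
  field_simp
  nlinarith [hs_sq, hs_pos, sq_nonneg (s - β), sq_nonneg (s + β)]
end

section
/- Let m > 0. For every ε > 0 there exists a constant C_ε > 0 such that for all t ∈ ℝ, 8πm·(−log(√(t² + 8πm) − t) + t/(√(t² + 8πm) − t)) ≤ (2 + ε)·t₊² + C_ε, where t₊ := max{t, 0}. -/
open Real

private lemma young_aux (e k x : ℝ) (he : 0 < e) : k * x ≤ e * x ^ 2 + k ^ 2 / (4 * e) := by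
  have h4e : (0:ℝ) < 4 * e := by linarith
  have h5 : k * x - e * x ^ 2 ≤ k ^ 2 / (4 * e) := by
    rw [le_div_iff₀ h4e]
    nlinarith [sq_nonneg (2 * e * x - k)]
  linarith

/-- Lemma 4.4: for `m > 0` and every `ε > 0` there is `C_ε > 0` with
`8πm(−log(√(t² + 8πm) − t) + t/(√(t² + 8πm) − t)) ≤ (2 + ε)t₊² + C_ε`. -/
theorem stmt_15 (m : ℝ) (hm : 0 < m) :
    ∀ ε > 0, ∃ Cε > 0, ∀ t : ℝ,
      8 * π * m *
          (-Real.log (Real.sqrt (t ^ 2 + 8 * π * m) - t) +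
            t / (Real.sqrt (t ^ 2 + 8 * π * m) - t)) ≤
        (2 + ε) * (max t 0) ^ 2 + Cε := by
  intro ε hε
  set a : ℝ := 8 * π * m with ha_def
  have ha : 0 < a := by have := pi_pos; positivity
  set sa : ℝ := Real.sqrt a with hsa_def
  have hsa : 0 < sa := Real.sqrt_pos.mpr ha
  have hsa2 : sa ^ 2 = a := Real.sq_sqrt ha.le
  set K : ℝ := 2 * a + sa with hK_def
  have hK : 0 < K := by positivity
  refine ⟨K ^ 2 / (4 * ε) + |a * sa - a * Real.log a| + 1, by positivity, ?_⟩
  intro t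
  have hsq : 0 < t ^ 2 + a := by positivity
  have hroot : Real.sqrt (t ^ 2 + a) ^ 2 = t ^ 2 + a := Real.sq_sqrt hsq.le
  have habs : |t| < Real.sqrt (t ^ 2 + a) := by
    have h := Real.sqrt_lt_sqrt (by positivity : (0:ℝ) ≤ t ^ 2)
      (by linarith : t ^ 2 < t ^ 2 + a)
    simpa [Real.sqrt_sq_eq_abs] using h
  set r := Real.sqrt (t ^ 2 + a) with hr_def
  have ht : t < r := (le_abs_self t).trans_lt habs
  have hs : 0 < r - t := by linarith
  have hu : 0 < r + t := by
    have h1 : -|t| ≤ t := neg_abs_le t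
    linarith
  set u : ℝ := r + t with hu_def
  have hprod : (r - t) * u = a := by
    have : (r - t) * u = r ^ 2 - t ^ 2 := by rw [hu_def]; ring
    rw [this, hroot]; ring
  have hst : r - t = a / u := by
    field_simp
    linarith [hprod]
  -- rewrite LHS
  have hT : (0:ℝ) ≤ max t 0 := le_max_right t 0
  set T : ℝ := max t 0 with hT_def
  clear_value a sa K r u T
  have htT : t ≤ T := by rw [hT_def]; exact le_max_left t 0
  have hub : u ≤ 2 * T + sa := by
    have hr_le : r ≤ |t| + sa := by
      rw [hr_def]
      have : t ^ 2 + a ≤ (|t| + sa) ^ 2 := by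
        nlinarith [sq_abs t, abs_nonneg t, hsa.le]
      calc Real.sqrt (t ^ 2 + a) ≤ Real.sqrt ((|t| + sa) ^ 2) :=
            Real.sqrt_le_sqrt this
        _ = |t| + sa := Real.sqrt_sq (by positivity)
    have habs2 : |t| + t ≤ 2 * T := by
      rcases le_total t 0 with h | h
      · rw [abs_of_nonpos h]; linarith
      · rw [abs_of_nonneg h, hT_def, max_eq_left h]; linarith
    rw [hu_def]; linarith
  have hlogu : Real.log u ≤ u := Real.log_le_self hu.le
  have hlhs : a * (-Real.log (r - t) + t / (r - t)) =
      a * Real.log u - a * Real.log a + t * u := by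
    rw [hst, Real.log_div ha.ne' hu.ne', div_div_eq_mul_div]
    field_simp
    ring
  rw [hlhs]
  -- bounds
  have h1 : a * Real.log u ≤ a * u := mul_le_mul_of_nonneg_left hlogu ha.le
  have h2 : a * u ≤ 2 * (a * T) + a * sa := by
    have := mul_le_mul_of_nonneg_left hub ha.le
    nlinarith
  have h3 : t * u ≤ T * u := mul_le_mul_of_nonneg_right htT hu.le
  have h4 : T * u ≤ 2 * T ^ 2 + sa * T := by
    have := mul_le_mul_of_nonneg_left hub hT
    nlinarith
  have hKT : 2 * (a * T) + sa * T ≤ ε * T ^ 2 + K ^ 2 / (4 * ε) := by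
    have h5 := young_aux ε K T hε
    have hKTeq : K * T = 2 * (a * T) + sa * T := by rw [hK_def]; ring
    linarith
  have habs3 : a * sa - a * Real.log a ≤ |a * sa - a * Real.log a| :=
    le_abs_self _
  have hgoal : (2 + ε) * T ^ 2 = 2 * T ^ 2 + ε * T ^ 2 := by ring
  linarith [h1, h2, h3, h4, hKT, habs3, hgoal]
end

section
/- Let X be a nonempty compact metric space equipped with a nonzero finite Borel measure μ whose topological support is all of X, and let K : X → ℝ be continuous. Then there exists a continuous function u : X → ℝ with ∫_X K e^u dμ > 0 if and only if K(x) > 0 for some x ∈ X. -/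
open Real MeasureTheory

/-- Abstract formulation of the interior case of Lemma 2.4(1): on a nonempty
compact metric space with a nonzero finite Borel measure of full support,
there is a continuous `u` with `∫ K e^u dμ > 0` iff `K` is positive somewhere. -/
theorem stmt_17 {X : Type*} [MetricSpace X] [CompactSpace X] [Nonempty X]
    [MeasurableSpace X] [BorelSpace X]
    (μ : Measure X) [IsFiniteMeasure μ] (hμ : μ ≠ 0) [μ.IsOpenPosMeasure]
    (K : X → ℝ) (hK : Continuous K) :
    (∃ u : X → ℝ, Continuous u ∧ 0 < ∫ x, K x * Real.exp (u x) ∂μ) ↔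
      ∃ x : X, 0 < K x := by
  constructor
  · rintro ⟨u, hu, hint⟩
    by_contra h
    push_neg at h
    have : ∫ x, K x * Real.exp (u x) ∂μ ≤ 0 :=
      integral_nonpos fun x => mul_nonpos_of_nonpos_of_nonneg (h x) (Real.exp_pos _).le
    linarith
  · rintro ⟨x₀, hx₀⟩
    set δ : ℝ := K x₀ / 2 with hδdef
    have hδ : 0 < δ := by positivity
    -- find radius r with K > δ on ball x₀ r
    have hopen : IsOpen {x | δ < K x} := isOpen_lt continuous_const hK
    have hx₀mem : x₀ ∈ {x | δ < K x} := by simp [hδdef]; linarith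
    obtain ⟨r, hr, hball⟩ := Metric.isOpen_iff.1 hopen x₀ hx₀mem
    -- bound for K
    obtain ⟨M, hM⟩ := isCompact_univ.exists_bound_of_continuousOn hK.continuousOn
    have hM' : ∀ x : X, |K x| ≤ M := fun x => hM x trivial
    have hM0 : 0 ≤ M := le_trans (abs_nonneg _) (hM' x₀)
    set T : ℝ := (μ Set.univ).toReal with hTdef
    have hT0 : 0 ≤ T := ENNReal.toReal_nonneg
    set m : ℝ := (μ (Metric.ball x₀ (r/2))).toReal with hmdef
    have hm : 0 < m := by
      apply ENNReal.toReal_pos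
      · exact (Metric.measure_ball_pos μ x₀ (by linarith)).ne'
      · exact measure_ne_top μ _
    set A : ℝ := max 1 ((M * T + 1) / (δ * m)) with hAdef
    have hA1 : 1 ≤ A := le_max_left _ _
    set c : ℝ := Real.log A + 1 with hcdef
    have hc0 : 0 < c := by
      have := Real.log_nonneg hA1
      linarith
    have hAc : A < Real.exp c := by
      rw [hcdef, Real.exp_add, Real.exp_log (by linarith)]
      nlinarith [Real.exp_one_gt_d9, hA1]
    -- the bump function
    set φ : X → ℝ := fun x => max 0 (min 1 (2 - dist x x₀ * 2 / r)) with hφdef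
    have hφcont : Continuous φ := by
      apply continuous_const.max
      apply continuous_const.min
      continuity
    have hφ01 : ∀ x, 0 ≤ φ x ∧ φ x ≤ 1 := fun x =>
      ⟨le_max_left _ _, max_le zero_le_one (min_le_left _ _)⟩
    have hφ1 : ∀ x ∈ Metric.ball x₀ (r/2), φ x = 1 := by
      intro x hx
      rw [Metric.mem_ball] at hx
      have h1 : (1:ℝ) ≤ 2 - dist x x₀ * 2 / r := by
        have h2 : dist x x₀ * 2 / r ≤ 1 := by
          rw [div_le_one hr]; nlinarith [dist_nonneg (x := x) (y := x₀)]
        linarith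
      simp [hφdef, min_eq_left h1]
    have hφ0 : ∀ x, x ∉ Metric.ball x₀ r → φ x = 0 := by
      intro x hx
      rw [Metric.mem_ball, not_lt] at hx
      have h1 : 2 - dist x x₀ * 2 / r ≤ 0 := by
        rw [sub_nonpos, le_div_iff₀ hr]
        nlinarith
      simp [hφdef, max_eq_left (le_trans (min_le_right _ _) h1)]
    refine ⟨fun x => c * φ x, continuous_const.mul hφcont, ?_⟩
    set u : X → ℝ := fun x => c * φ x with hudef
    have hucont : Continuous u := continuous_const.mul hφcont
    set f : X → ℝ := fun x => K x * Real.exp (u x) with hfdef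
    have hfcont : Continuous f := hK.mul (hucont.rexp)
    have hfint : Integrable f μ :=
      hfcont.integrable_of_hasCompactSupport (isClosed_tsupport f).isCompact
    have hmeas : MeasurableSet (Metric.ball x₀ r) := Metric.isOpen_ball.measurableSet
    -- split the integral
    have hsplit : ∫ x, f x ∂μ
        = (∫ x in Metric.ball x₀ r, f x ∂μ) + ∫ x in (Metric.ball x₀ r)ᶜ, f x ∂μ :=
      (integral_add_compl hmeas hfint).symm
    -- inner estimate
    have hnonneg : ∀ x ∈ Metric.ball x₀ r, 0 ≤ f x := by
      intro x hx
      have h1 : δ < K x := hball hx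
      show 0 ≤ K x * Real.exp (u x)
      exact mul_nonneg (by linarith) (Real.exp_pos _).le
    have hinner2 : δ * Real.exp c * m ≤ ∫ x in Metric.ball x₀ (r/2), f x ∂μ := by
      have : ∀ x ∈ Metric.ball x₀ (r/2), δ * Real.exp c ≤ f x := by
        intro x hx
        have h1 : δ < K x := hball (Metric.ball_subset_ball (by linarith) hx)
        have h2 : u x = c := by simp [hudef, hφ1 x hx]
        rw [hfdef]
        simp only [h2]
        have := Real.exp_pos c
        nlinarith
      calc δ * Real.exp c * m = (δ * Real.exp c) * (μ (Metric.ball x₀ (r/2))).toReal := by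
            rw [hmdef]
        _ ≤ ∫ x in Metric.ball x₀ (r/2), f x ∂μ :=
            setIntegral_ge_of_const_le_real Metric.isOpen_ball.measurableSet
              (measure_ne_top μ _) this hfint.integrableOn
    have hinner : δ * Real.exp c * m ≤ ∫ x in Metric.ball x₀ r, f x ∂μ := by
      refine le_trans hinner2 (setIntegral_mono_set hfint.integrableOn ?_ ?_)
      · filter_upwards [self_mem_ae_restrict hmeas] with x hx using hnonneg x hx
      · exact HasSubset.Subset.eventuallyLE (Metric.ball_subset_ball (by linarith))
    -- outer estimate
    have houter : -(M * T) ≤ ∫ x in (Metric.ball x₀ r)ᶜ, f x ∂μ := by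
      have hcong : ∫ x in (Metric.ball x₀ r)ᶜ, f x ∂μ = ∫ x in (Metric.ball x₀ r)ᶜ, K x ∂μ := by
        refine setIntegral_congr_fun hmeas.compl fun x hx => ?_
        simp [hfdef, hudef, hφ0 x hx]
      rw [hcong]
      have hb : ‖∫ x in (Metric.ball x₀ r)ᶜ, K x ∂μ‖ ≤ M * (μ (Metric.ball x₀ r)ᶜ).toReal := by
        apply norm_setIntegral_le_of_norm_le_const (measure_lt_top μ _)
        · intro x _
          exact hM' x
      have h2 : M * (μ (Metric.ball x₀ r)ᶜ).toReal ≤ M * T := by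
        apply mul_le_mul_of_nonneg_left _ hM0
        exact ENNReal.toReal_mono (measure_ne_top μ _) (measure_mono (Set.subset_univ _))
      have := (abs_le.1 (by rwa [Real.norm_eq_abs] at hb)).1
      linarith
    -- conclude
    have hbig : M * T + 1 ≤ δ * Real.exp c * m := by
      have h1 : (M * T + 1) / (δ * m) ≤ A := le_max_right _ _
      have h2 : M * T + 1 ≤ A * (δ * m) := by
        rwa [div_le_iff₀ (by positivity)] at h1
      nlinarith [mul_lt_mul_of_pos_right hAc (mul_pos hδ hm)]
    rw [show (∫ x, K x * Real.exp (u x) ∂μ) = ∫ x, f x ∂μ from rfl, hsplit]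
    linarith
end

section
/- Let X be a compact metric space, let μ and σ be finite Borel measures on X, and let K, h : X → ℝ be continuous. Suppose there is a closed set Γ ⊆ X with σ(X ∖ Γ) = 0 and μ(Γ) = 0, and a point y₀ ∈ Γ with h(y₀) > 0 and σ(B(y₀, r)) > 0 for every r > 0, where B(y₀, r) denotes the open metric ball. Then for every constant c > 0 there exists a continuous function u : X → [0, ∞) such that ∫_X h e^{u/2} dσ > √(c · ∫_X |K| e^u dμ). -/
open Real MeasureTheory

set_option maxHeartbeats 1000000 in
/-- Abstract formulation of the boundary case of Lemma 2.4(1): if `h > 0` at a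
point `y₀` of the "boundary" `Γ` charged by `σ` near `y₀`, while `μ` does not
charge `Γ`, then for every `c > 0` there is a continuous `u ≥ 0` with
`∫ h e^{u/2} dσ > √(c ∫ |K| e^u dμ)`. -/
theorem stmt_19 {X : Type*} [MetricSpace X] [CompactSpace X]
    [MeasurableSpace X] [BorelSpace X]
    (μ σ : Measure X) [IsFiniteMeasure μ] [IsFiniteMeasure σ]
    (K h : X → ℝ) (hK : Continuous K) (hh : Continuous h)
    (Γ : Set X) (hΓ : IsClosed Γ) (hσΓ : σ Γᶜ = 0) (hμΓ : μ Γ = 0)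
    (y₀ : X) (hy₀ : y₀ ∈ Γ) (hhy₀ : 0 < h y₀)
    (hball : ∀ r : ℝ, 0 < r → 0 < σ (Metric.ball y₀ r)) :
    ∀ c : ℝ, 0 < c → ∃ u : X → ℝ, Continuous u ∧ (∀ x, 0 ≤ u x) ∧
      Real.sqrt (c * ∫ x, |K x| * Real.exp (u x) ∂μ) <
        ∫ x, h x * Real.exp (u x / 2) ∂σ := by
  intro c hc
  -- a radius where h is large
  obtain ⟨r, hr, hrball⟩ : ∃ r > 0, Metric.ball y₀ r ⊆ {x | h y₀ / 2 < h x} := by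
    have hopen : IsOpen {x | h y₀ / 2 < h x} := isOpen_lt continuous_const hh
    have hmem : y₀ ∈ {x | h y₀ / 2 < h x} := by simp; linarith
    exact Metric.isOpen_iff.1 hopen y₀ hmem
  -- bounds on |K| and |h|
  obtain ⟨xK, -, hxK⟩ := isCompact_univ.exists_isMaxOn (⟨y₀, trivial⟩ : Set.univ.Nonempty)
    (hK.abs.continuousOn (s := Set.univ))
  obtain ⟨xh, -, hxh⟩ := isCompact_univ.exists_isMaxOn (⟨y₀, trivial⟩ : Set.univ.Nonempty)
    (hh.abs.continuousOn (s := Set.univ))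
  set MK := |K xK| with hMK
  set Mh := |h xh| with hMh
  have hMK0 : 0 ≤ MK := abs_nonneg _
  have hMh0 : 0 ≤ Mh := abs_nonneg _
  have hKle : ∀ x, |K x| ≤ MK := fun x => hxK (Set.mem_univ x)
  have hhle : ∀ x, |h x| ≤ Mh := fun x => hxh (Set.mem_univ x)
  set μX := (μ Set.univ).toReal with hμX
  set σX := (σ Set.univ).toReal with hσX
  have hμX0 : 0 ≤ μX := ENNReal.toReal_nonneg
  have hσX0 : 0 ≤ σX := ENNReal.toReal_nonneg
  -- the small ball
  set s0 := (σ (Metric.ball y₀ (r / 2))).toReal with hs0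
  have hs0pos : 0 < s0 := ENNReal.toReal_pos (hball _ (by linarith)).ne' (measure_ne_top _ _)
  set T := Real.sqrt (c * (MK * (1 + μX))) with hT
  have hT0 : 0 ≤ T := Real.sqrt_nonneg _
  -- choose the constant C
  set R := (T + Mh * σX + 1) / (h y₀ / 2 * s0) with hR
  have hRpos : 0 < R := by
    apply div_pos (by nlinarith) (by positivity)
  set C := 2 * max 0 (Real.log R + 1) with hC
  have hC0 : 0 ≤ C := by positivity
  have hCbig : R < Real.exp (C / 2) := by
    have : Real.log R < C / 2 := by
      have : Real.log R + 1 ≤ max 0 (Real.log R + 1) := le_max_right _ _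
      simp only [hC]; linarith [this]
    calc R = Real.exp (Real.log R) := (Real.exp_log hRpos).symm
      _ < Real.exp (C / 2) := Real.exp_lt_exp.2 this
  -- choose the open set V
  obtain ⟨V, hΓV, hVopen, hVsmall⟩ := Set.exists_isOpen_lt_of_lt Γ
    (ENNReal.ofReal (Real.exp (-C)))
    (by rw [hμΓ]; exact ENNReal.ofReal_pos.2 (Real.exp_pos _))
  have hVreal : (μ V).toReal < Real.exp (-C) := by
    rw [← ENNReal.ofReal_toReal (measure_ne_top μ V)] at hVsmall
    exact (ENNReal.ofReal_lt_ofReal_iff_of_nonneg ENNReal.toReal_nonneg).1 hVsmall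
  -- the compact set A and open set W
  set A := Metric.closedBall y₀ (r / 2) ∩ Γ with hA
  have hAclosed : IsClosed A := Metric.isClosed_closedBall.inter hΓ
  set W := V ∩ Metric.ball y₀ r with hW
  have hWopen : IsOpen W := hVopen.inter Metric.isOpen_ball
  have hAW : A ⊆ W := by
    rintro x ⟨hx1, hx2⟩
    exact ⟨hΓV hx2, lt_of_le_of_lt (Metric.mem_closedBall.1 hx1) (by linarith)⟩
  -- Urysohn bump function
  obtain ⟨f, hf0, hf1, hf01⟩ := exists_continuous_zero_one_of_isCompact
    hWopen.isClosed_compl.isCompact hAclosed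
    (by rw [Set.disjoint_compl_left_iff_subset]; exact hAW)
  set u : X → ℝ := fun x => C * f x with hu
  have hucont : Continuous u := continuous_const.mul f.continuous
  have hupos : ∀ x, 0 ≤ u x := fun x => mul_nonneg hC0 (hf01 x).1
  have huleC : ∀ x, u x ≤ C := fun x => by
    have := (hf01 x).2
    calc C * f x ≤ C * 1 := by nlinarith
      _ = C := mul_one C
  have huW : ∀ x ∉ W, u x = 0 := fun x hx => by
    simp [hu, hf0 hx]
  have huA : ∀ x ∈ A, u x = C := fun x hx => by
    have : f x = 1 := hf1 hx
    simp [hu, this]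
  refine ⟨u, hucont, hupos, ?_⟩
  -- integrability
  have hint1 : Integrable (fun x => |K x| * Real.exp (u x)) μ :=
    (hK.abs.mul (Real.continuous_exp.comp hucont)).integrable_of_hasCompactSupport
      (HasCompactSupport.of_compactSpace _)
  have hint2 : Integrable (fun x => h x * Real.exp (u x / 2)) σ :=
    (hh.mul (Real.continuous_exp.comp (hucont.div_const 2))).integrable_of_hasCompactSupport
      (HasCompactSupport.of_compactSpace _)
  have hVmeas : MeasurableSet V := hVopen.measurableSet
  have hAmeas : MeasurableSet A := hAclosed.measurableSet
  -- upper bound on the μ-integral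
  have hμbound : ∫ x, |K x| * Real.exp (u x) ∂μ ≤ MK * Real.exp C * (μ V).toReal + MK * μX := by
    have hptwise : ∀ x, |K x| * Real.exp (u x) ≤
        V.indicator (fun _ => MK * Real.exp C) x + MK := by
      intro x
      by_cases hx : x ∈ V
      · rw [Set.indicator_of_mem hx]
        have h1 : Real.exp (u x) ≤ Real.exp C := Real.exp_le_exp.2 (huleC x)
        nlinarith [Real.exp_pos (u x), hKle x, abs_nonneg (K x), Real.exp_pos C]
      · rw [Set.indicator_of_notMem hx]
        have hxW : x ∉ W := fun hxW => hx hxW.1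
        rw [huW x hxW]
        simpa using hKle x
    have hintb : Integrable (fun x => V.indicator (fun _ => MK * Real.exp C) x + MK) μ :=
      ((integrable_const _).indicator hVmeas).add (integrable_const _)
    calc ∫ x, |K x| * Real.exp (u x) ∂μ
        ≤ ∫ x, (V.indicator (fun _ => MK * Real.exp C) x + MK) ∂μ :=
          integral_mono hint1 hintb hptwise
      _ = MK * Real.exp C * (μ V).toReal + MK * μX := by
          rw [integral_add ((integrable_const _).indicator hVmeas) (integrable_const _),
            integral_indicator_const _ hVmeas, integral_const]
          simp only [smul_eq_mul, hμX, measureReal_def]; ring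
  -- lower bound on the σ-integral
  have hσA : s0 ≤ (σ A).toReal := by
    have h1 : σ (Metric.ball y₀ (r / 2)) ≤ σ A := by
      have h2 : σ (Metric.closedBall y₀ (r / 2)) ≤ σ A + σ Γᶜ := by
        calc σ (Metric.closedBall y₀ (r / 2))
            ≤ σ (Metric.closedBall y₀ (r / 2) ∩ Γ) + σ (Metric.closedBall y₀ (r / 2) \ Γ) :=
              measure_le_inter_add_diff σ _ _
          _ ≤ σ A + σ Γᶜ := add_le_add le_rfl (measure_mono (Set.diff_subset_compl _ _))
      rw [hσΓ, add_zero] at h2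
      exact le_trans (measure_mono Metric.ball_subset_closedBall) h2
    exact ENNReal.toReal_le_toReal (measure_ne_top _ _) (measure_ne_top _ _) |>.2 h1
      |>.trans_eq' rfl
  have hσbound : h y₀ / 2 * Real.exp (C / 2) * (σ A).toReal - Mh * σX ≤
      ∫ x, h x * Real.exp (u x / 2) ∂σ := by
    have hptwise : ∀ x, A.indicator (fun _ => h y₀ / 2 * Real.exp (C / 2)) x - Mh ≤
        h x * Real.exp (u x / 2) := by
      intro x
      by_cases hx : x ∈ A
      · rw [Set.indicator_of_mem hx]
        have hhx : h y₀ / 2 < h x := hrball (Metric.mem_ball.2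
          (lt_of_le_of_lt (Metric.mem_closedBall.1 hx.1) (by linarith)))
        rw [huA x hx]
        nlinarith [Real.exp_pos (C / 2)]
      · rw [Set.indicator_of_notMem hx]
        by_cases hxB : x ∈ Metric.ball y₀ r
        · have hhx : h y₀ / 2 < h x := hrball hxB
          nlinarith [Real.exp_pos (u x / 2)]
        · have hxW : x ∉ W := fun hxW => hxB hxW.2
          rw [huW x hxW]
          simp only [zero_div, Real.exp_zero, mul_one]
          linarith [abs_le.1 (hhle x) |>.1]
    have hintb : Integrable (fun x => A.indicator (fun _ => h y₀ / 2 * Real.exp (C / 2)) x - Mh) σ :=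
      ((integrable_const _).indicator hAmeas).sub (integrable_const _)
    calc h y₀ / 2 * Real.exp (C / 2) * (σ A).toReal - Mh * σX
        = ∫ x, (A.indicator (fun _ => h y₀ / 2 * Real.exp (C / 2)) x - Mh) ∂σ := by
          rw [integral_sub ((integrable_const _).indicator hAmeas) (integrable_const _),
            integral_indicator_const _ hAmeas, integral_const]
          simp only [smul_eq_mul, hσX, measureReal_def]; ring
      _ ≤ ∫ x, h x * Real.exp (u x / 2) ∂σ := integral_mono hintb hint2 hptwise
  -- put the bounds together
  have hμfinal : c * ∫ x, |K x| * Real.exp (u x) ∂μ ≤ c * (MK * (1 + μX)) := by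
    have h1 : Real.exp C * (μ V).toReal ≤ 1 := by
      have := hVreal.le
      calc Real.exp C * (μ V).toReal ≤ Real.exp C * Real.exp (-C) := by
            nlinarith [Real.exp_pos C]
        _ = 1 := by rw [← Real.exp_add]; simp
    have : ∫ x, |K x| * Real.exp (u x) ∂μ ≤ MK * (1 + μX) := by
      calc ∫ x, |K x| * Real.exp (u x) ∂μ ≤ MK * Real.exp C * (μ V).toReal + MK * μX := hμbound
        _ ≤ MK * 1 + MK * μX := by nlinarith [Real.exp_pos C, ENNReal.toReal_nonneg (a := μ V)]
        _ = MK * (1 + μX) := by ring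
    nlinarith
  have hsqrt : Real.sqrt (c * ∫ x, |K x| * Real.exp (u x) ∂μ) ≤ T :=
    Real.sqrt_le_sqrt hμfinal
  have hfinal : T < ∫ x, h x * Real.exp (u x / 2) ∂σ := by
    have h1 : T + Mh * σX + 1 < h y₀ / 2 * Real.exp (C / 2) * s0 := by
      have := (div_lt_iff₀ (by positivity : (0:ℝ) < h y₀ / 2 * s0)).1 hCbig
      nlinarith
    have h2 : h y₀ / 2 * Real.exp (C / 2) * s0 ≤ h y₀ / 2 * Real.exp (C / 2) * (σ A).toReal := by
      have : 0 < h y₀ / 2 * Real.exp (C / 2) := by positivity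
      nlinarith
    linarith [hσbound]
  linarith [hsqrt, hfinal]
end
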